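/- arXiv:1205.1840 — 2 statements merged into one kernel-verified Lean document; each statement's English description precedes it below -/
import Mathlib

section
/- Let $1 \le k \le n$ and let $A$ be a Hermitian $n\times n$ complex matrix belonging to the G\u00e5rding cone $\Gamma_k^+$. Then the Newton transformation $T_{k-1}(A)$ is positive definite. -/
open Matrix
open scoped ComplexOrder

/-- The `k`-th elementary symmetric function of a finite family of reals. -/
noncomputable def esymmR {ι : Type*} [Fintype ι] (k : ℕ) (lam : ι → ℝ) : ℝ :=
  ∑ s ∈ Finset.univ.powersetCard k, ∏ i ∈ s, lam i

/-- `σ_k(A)`: the `k`-th elementary symmetric function of the (real) eigenvalues of a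
Hermitian matrix `A`. -/
noncomputable def sigmaH {n : ℕ} {A : Matrix (Fin n) (Fin n) ℂ}
    (hA : A.IsHermitian) (k : ℕ) : ℝ :=
  esymmR k hA.eigenvalues

/-- `T_k(A)`: the `k`-th Newton transformation of a Hermitian matrix `A`,
`T_k(A) = ∑_{j=0}^k (-1)^j σ_{k-j}(A) A^j`. -/
noncomputable def newtonH {n : ℕ} {A : Matrix (Fin n) (Fin n) ℂ}
    (hA : A.IsHermitian) (k : ℕ) : Matrix (Fin n) (Fin n) ℂ :=
  ∑ j ∈ Finset.range (k + 1), ((-1 : ℂ) ^ j * (sigmaH hA (k - j) : ℂ)) • A ^ j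

namespace GardingAux
open Multiset Polynomial

lemma esymm_zero' (s : Multiset ℝ) : s.esymm 0 = 1 := by
  simp [Multiset.esymm, Multiset.powersetCard_zero_left]

lemma esymm_cons (x : ℝ) (s : Multiset ℝ) (j : ℕ) :
    (x ::ₘ s).esymm (j + 1) = s.esymm (j + 1) + x * s.esymm j := by
  simp only [Multiset.esymm, Multiset.powersetCard_cons, Multiset.map_add, Multiset.sum_add,
    Multiset.map_map, Function.comp_def, Multiset.prod_cons]
  rw [← Multiset.sum_map_mul_left]

lemma esymm_eq_zero' (s : Multiset ℝ) (j : ℕ) (h : Multiset.card s < j) : s.esymm j = 0 := by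
  simp [Multiset.esymm, Multiset.powersetCard_eq_empty _ h]

lemma esymm_card (s : Multiset ℝ) : s.esymm (Multiset.card s) = s.prod := by
  induction s using Multiset.induction with
  | empty => simp [esymm_zero']
  | cons x s ih =>
      rw [Multiset.card_cons, esymm_cons, esymm_eq_zero' s _ (Nat.lt_succ_self _), ih]
      simp

lemma esymm_one' (s : Multiset ℝ) : s.esymm 1 = s.sum := by
  induction s using Multiset.induction with
  | empty => simp [esymm_eq_zero']; exact esymm_eq_zero' _ _ (by simp)
  | cons x s ih =>
      rw [show (1:ℕ) = 0 + 1 from rfl, esymm_cons, esymm_zero'] at *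
      simp [ih, add_comm]

lemma sq_sum' (s : Multiset ℝ) :
    s.sum ^ 2 = (s.map (· ^ 2)).sum + 2 * s.esymm 2 := by
  induction s using Multiset.induction with
  | empty => simp [esymm_eq_zero']; exact esymm_eq_zero' _ _ (by simp)
  | cons x s ih =>
      rw [Multiset.sum_cons, Multiset.map_cons, Multiset.sum_cons,
        show (2:ℕ) = 1 + 1 from rfl, esymm_cons, esymm_one']
      ring_nf
      nlinarith [ih]


lemma esymm_inv (s : Multiset ℝ) (h0 : (0:ℝ) ∉ s) :
    ∀ i j, i + j = Multiset.card s →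
      (s.map (·⁻¹)).esymm j * s.prod = s.esymm i := by
  induction s using Multiset.induction with
  | empty =>
      intro i j hij
      simp at hij
      simp [hij.1, hij.2, esymm_zero']
  | cons x s ih =>
      intro i j hij
      have hx : x ≠ 0 := fun h => h0 (by simp [h])
      have h0s : (0:ℝ) ∉ s := fun h => h0 (by simp [h])
      rw [Multiset.card_cons] at hij
      rcases j with _ | j'
      · -- j = 0
        have : i = Multiset.card s + 1 := by omega
        subst this
        rw [esymm_zero', one_mul, ← Multiset.card_cons x s, esymm_card]
      · rw [Multiset.map_cons, esymm_cons, Multiset.prod_cons]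
        set u := (Multiset.map (·⁻¹) s).esymm (j' + 1) with hu
        set v := (Multiset.map (·⁻¹) s).esymm j' with hv
        have expand : (u + x⁻¹ * v) * (x * s.prod) = x * (u * s.prod) + v * s.prod := by
          field_simp
        rw [expand]
        rcases i with _ | i'
        · -- i = 0, j' = card s
          have hj' : j' = Multiset.card s := by omega
          subst hj'
          have hu0 : u = 0 := by rw [hu]; exact esymm_eq_zero' _ _ (by simp)
          rw [hu0, zero_mul, mul_zero, zero_add, hv,
            ih h0s 0 (Multiset.card s) (by omega), esymm_zero', esymm_zero']
        · have h1 : i' + (j' + 1) = Multiset.card s := by omega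
          have h2 : (i' + 1) + j' = Multiset.card s := by omega
          rw [hu, hv, ih h0s i' (j'+1) h1, ih h0s (i'+1) j' h2, esymm_cons]
          ring
  
lemma base_case (m : ℕ) (ν : Multiset ℝ)
    (hc : Multiset.card ν = m + 2) (h1 : ν.esymm (m + 1) = 0) :
    ν.esymm (m + 2) * ν.esymm m ≤ 0 := by
  by_cases h0 : (0:ℝ) ∈ ν
  · rw [← hc, esymm_card, Multiset.prod_eq_zero h0, zero_mul]
  · have hP : ν.prod ≠ 0 := Multiset.prod_ne_zero h0
    set ρ := ν.map (·⁻¹) with hρ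
    have e1 : ρ.esymm 1 * ν.prod = ν.esymm (m + 1) := esymm_inv ν h0 (m+1) 1 (by omega)
    have e2 : ρ.esymm 2 * ν.prod = ν.esymm m := esymm_inv ν h0 m 2 (by omega)
    have hsum : ρ.sum = 0 := by
      have := e1.trans h1
      rcases mul_eq_zero.mp this with h | h
      · rwa [esymm_one'] at h
      · exact absurd h hP
    have hsq := sq_sum' ρ
    rw [hsum] at hsq
    have hnn : 0 ≤ (ρ.map (· ^ 2)).sum := by
      apply Multiset.sum_nonneg
      intro a ha
      obtain ⟨b, _, rfl⟩ := Multiset.mem_map.mp ha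
      positivity
    have h2 : ρ.esymm 2 ≤ 0 := by nlinarith
    have : ν.esymm (m+2) = ν.prod := by rw [← hc, esymm_card]
    rw [this, ← e2]
    nlinarith [sq_nonneg ν.prod]


lemma newton_aux : ∀ (c : ℕ) (ν : Multiset ℝ) (m : ℕ), Multiset.card ν = c → m + 2 ≤ c →
    0 < ν.esymm m → ν.esymm (m + 1) = 0 → ν.esymm (m + 2) ≤ 0 := by
  intro c
  induction c using Nat.strong_induction_on with
  | _ c ih =>
    intro ν m hc hm h0 h1
    rcases eq_or_lt_of_le hm with heq | hlt
    · have hb := base_case m ν (by omega) h1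
      nlinarith
    · -- derivative step
      set p := (ν.map (fun t => X - C t)).prod with hp
      have hmonic : p.Monic :=
        monic_multiset_prod_of_monic ν (fun t => X - C t) (fun t _ => monic_X_sub_C t)
      have hdeg : p.natDegree = c := by
        rw [hp, natDegree_multiset_prod_of_monic _ (fun f hf => by
          obtain ⟨t, _, rfl⟩ := Multiset.mem_map.mp hf; exact monic_X_sub_C t)]
        simp [Multiset.map_map, Function.comp_def, natDegree_X_sub_C, hc]
      have hroots : p.roots = ν := roots_multiset_prod_X_sub_C ν
      set q := derivative p with hqdef
      have hcard1 : Multiset.card q.roots ≤ c - 1 :=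
        le_trans q.card_roots' (le_trans (natDegree_derivative_le p) (by omega))
      have hcard2 : c ≤ Multiset.card q.roots + 1 := by
        have := p.card_roots_le_derivative
        rwa [hroots, hc] at this
      have hqcard : Multiset.card q.roots = c - 1 := by omega
      have hqdeg : q.natDegree = c - 1 := by
        have h1' := q.card_roots'
        have h2' : q.natDegree ≤ c - 1 := le_trans (natDegree_derivative_le p) (by omega)
        omega
      have hpc : p.coeff c = 1 := by
        have := hmonic.coeff_natDegree
        rwa [hdeg] at this
      have hlc : q.leadingCoeff = (c : ℝ) := by
        rw [Polynomial.leadingCoeff, hqdeg, hqdef, coeff_derivative]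
        have hc1 : c - 1 + 1 = c := by omega
        rw [hc1, hpc, one_mul, Nat.cast_sub (show 1 ≤ c by omega)]
        ring
      have hqcard' : Multiset.card q.roots = q.natDegree := by rw [hqcard, hqdeg]
      have hq : q = C (c : ℝ) * (q.roots.map fun a => X - C a).prod := by
        rw [← hlc]
        exact (C_leadingCoeff_mul_prod_multiset_X_sub_C hqcard').symm
      set μ := q.roots with hμ
      have key : ∀ i j : ℕ, i + 1 + j = c →
          ((i : ℝ) + 1) * ν.esymm j = (c : ℝ) * μ.esymm j := by
        intro i j hij
        have e1 : q.coeff i = p.coeff (i + 1) * ((i : ℝ) + 1) := by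
          rw [hqdef, coeff_derivative]
        have hνsub : Multiset.card ν - (i + 1) = j := by omega
        have e2 : p.coeff (i + 1) = (-1 : ℝ) ^ j * ν.esymm j := by
          rw [hp, Multiset.prod_X_sub_C_coeff ν (by omega), hνsub]
        have hμsub : Multiset.card μ - i = j := by rw [hqcard]; omega
        have e3 : q.coeff i = (c : ℝ) * ((-1 : ℝ) ^ j * μ.esymm j) := by
          conv_lhs => rw [hq]
          rw [coeff_C_mul, Multiset.prod_X_sub_C_coeff μ (by rw [hqcard]; omega), hμsub]
        have E : (-1 : ℝ) ^ j * (((i : ℝ) + 1) * ν.esymm j)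
            = (-1 : ℝ) ^ j * ((c : ℝ) * μ.esymm j) := by
          rw [e2] at e1
          rw [e1] at e3
          linear_combination e3
        exact mul_left_cancel₀ (pow_ne_zero j (by norm_num : (-1:ℝ) ≠ 0)) E
      have k0 := key (c - 1 - m) m (by omega)
      have k1 := key (c - 1 - (m+1)) (m+1) (by omega)
      have k2 := key (c - 1 - (m+2)) (m+2) (by omega)
      have hcpos : (0:ℝ) < (c:ℝ) := by exact_mod_cast (show 0 < c by omega)
      have ha0 : (0:ℝ) < ((c - 1 - m : ℕ) : ℝ) + 1 := by positivity
      have ha2 : (0:ℝ) < ((c - 1 - (m+2) : ℕ) : ℝ) + 1 := by positivity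
      have hμ0 : 0 < μ.esymm m := by nlinarith
      have hμ1 : μ.esymm (m+1) = 0 := by
        have hz : (c:ℝ) * μ.esymm (m+1) = 0 := by rw [← k1, h1]; ring
        exact (mul_eq_zero.mp hz).resolve_left (ne_of_gt hcpos)
      have hμ2 : μ.esymm (m+2) ≤ 0 :=
        ih (c-1) (by omega) μ m hqcard (by omega) hμ0 hμ1
      by_contra hcon
      push_neg at hcon
      nlinarith [mul_nonpos_of_nonneg_of_nonpos (le_of_lt hcpos) hμ2, mul_pos ha2 hcon]

lemma garding : ∀ (k : ℕ) (M : Multiset ℝ) (x : ℝ), x ∈ M → k + 1 ≤ Multiset.card M →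
    (∀ j, 1 ≤ j → j ≤ k + 1 → 0 < M.esymm j) → 0 < (M.erase x).esymm k := by
  intro k
  induction k using Nat.strong_induction_on with
  | _ k ih =>
    rcases Nat.eq_zero_or_pos k with rfl | hkpos
    · intro M x _ _ _
      rw [esymm_zero']; norm_num
    obtain ⟨k', rfl⟩ : ∃ k', k = k' + 1 := ⟨k - 1, by omega⟩
    intro M x hxM hcard hpos
    -- the maximal element
    have hne : M.toFinset.Nonempty := ⟨x, Multiset.mem_toFinset.mpr hxM⟩
    set x₀ := M.toFinset.max' hne with hx₀def
    have hx₀M : x₀ ∈ M := Multiset.mem_toFinset.mp (M.toFinset.max'_mem hne)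
    have hmax : ∀ y ∈ M, y ≤ x₀ := fun y hy =>
      M.toFinset.le_max' y (Multiset.mem_toFinset.mpr hy)
    have hx₀pos : 0 < x₀ := by
      by_contra hle
      push_neg at hle
      have hsum : M.sum ≤ 0 := by
        calc M.sum ≤ Multiset.card M • x₀ := Multiset.sum_le_card_nsmul M x₀ hmax
        _ ≤ 0 := smul_nonpos_of_nonneg_of_nonpos (Nat.zero_le _) hle
      have := hpos 1 le_rfl (by omega)
      rw [esymm_one'] at this
      linarith
    set μ := M.erase x₀ with hμdef
    have hμcard : Multiset.card μ = Multiset.card M - 1 := Multiset.card_erase_of_mem hx₀M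
    have hconsμ : x₀ ::ₘ μ = M := Multiset.cons_erase hx₀M
    -- small esymms of μ are positive
    have hsmall : ∀ j, j ≤ k' → 0 < μ.esymm j := by
      intro j hj
      rcases Nat.eq_zero_or_pos j with rfl | hjpos
      · rw [esymm_zero']; norm_num
      · exact ih j (by omega) M x₀ hx₀M (by omega)
          (fun i hi1 hi2 => hpos i hi1 (by omega))
    -- the key positivity at the maximal element
    have h₀ : 0 < μ.esymm (k' + 1) := by
      by_contra hcon
      push_neg at hcon
      set a := μ.esymm k' with ha
      set b := μ.esymm (k' + 1) with hb
      have hapos : 0 < a := hsmall k' le_rfl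
      -- esymm of M in terms of μ
      have hMk : M.esymm (k' + 1) = b + x₀ * a := by
        rw [← hconsμ, esymm_cons]
      have hMk1 : M.esymm (k' + 2) = μ.esymm (k' + 2) + x₀ * b := by
        rw [← hconsμ, esymm_cons]
      have hMkpos := hpos (k' + 1) (by omega) (by omega)
      have hMk1pos := hpos (k' + 2) (by omega) (by omega)
      set t := -b / a with ht
      have htnn : 0 ≤ t := by
        rw [ht]
        apply div_nonneg (by linarith) (le_of_lt hapos)
      have htlt : t < x₀ := by
        rw [ht, div_lt_iff₀ hapos]
        nlinarith [hMk ▸ hMkpos]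
      set ν := t ::ₘ μ with hν
      have hνcard : Multiset.card ν = Multiset.card M := by
        rw [hν, Multiset.card_cons, hμcard]; omega
      have hν0 : 0 < ν.esymm k' := by
        rcases Nat.eq_zero_or_pos k' with rfl | hk'pos
        · rw [esymm_zero']; norm_num
        · obtain ⟨k'', rfl⟩ : ∃ k'', k' = k'' + 1 := ⟨k' - 1, by omega⟩
          rw [hν, esymm_cons]
          have := hsmall k'' (by omega)
          nlinarith [hsmall (k'' + 1) le_rfl]
      have hν1 : ν.esymm (k' + 1) = 0 := by
        rw [hν, esymm_cons, ← hb, ← ha, ht]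
        field_simp
        ring
      have hν2 : ν.esymm (k' + 2) ≤ 0 :=
        newton_aux (Multiset.card M) ν k' hνcard (by omega) hν0 hν1
      rw [hν, esymm_cons, ← hb] at hν2
      -- but esymm (k'+2) ν = e_{k'+2} μ + t * b > 0
      have hd : x₀ * (-b) ≥ t * (-b) := by
        apply mul_le_mul_of_nonneg_right (le_of_lt htlt) (by linarith)
      nlinarith [hMk1 ▸ hMk1pos]
    -- now the general element x
    by_cases hxx : x = x₀
    · rw [hxx]; exact h₀
    · have hxμ : x ∈ μ := by
        rw [hμdef]
        exact (Multiset.mem_erase_of_ne hxx).mpr hxM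
      have hx₀μ' : x₀ ∈ M.erase x := by
        exact (Multiset.mem_erase_of_ne (Ne.symm hxx)).mpr hx₀M
      set μ' := μ.erase x with hμ'def
      have hcomm : (M.erase x).erase x₀ = μ' := by
        rw [hμ'def, hμdef, Multiset.erase_comm]
      have hμ'pos : 0 < μ'.esymm k' := by
        apply ih k' (by omega) μ x hxμ (by rw [hμcard]; omega)
        intro j hj1 hj2
        rcases Nat.lt_or_ge j (k' + 1) with h | h
        · exact hsmall j (by omega)
        · have : j = k' + 1 := by omega
          rw [this]; exact h₀
      have e1 : (M.erase x).esymm (k' + 1) = μ'.esymm (k' + 1) + x₀ * μ'.esymm k' := by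
        rw [← Multiset.cons_erase hx₀μ', hcomm, esymm_cons]
      have e2 : μ.esymm (k' + 1) = μ'.esymm (k' + 1) + x * μ'.esymm k' := by
        rw [← Multiset.cons_erase hxμ, esymm_cons]
      rw [e1]
      have hxle : x ≤ x₀ := hmax x hxM
      rw [e2] at h₀
      nlinarith [mul_le_mul_of_nonneg_right hxle (le_of_lt hμ'pos)]

lemma telescope (μ : Multiset ℝ) (x : ℝ) : ∀ m : ℕ,
    ∑ j ∈ Finset.range (m + 1), (-1 : ℝ) ^ j * (x ::ₘ μ).esymm (m - j) * x ^ j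
      = μ.esymm m := by
  intro m
  induction m with
  | zero => simp [esymm_zero']
  | succ m ihm =>
      rw [Finset.sum_range_succ']
      have hshift : ∀ j ∈ Finset.range (m + 1),
          (-1 : ℝ) ^ (j + 1) * (x ::ₘ μ).esymm (m + 1 - (j + 1)) * x ^ (j + 1)
            = -x * ((-1 : ℝ) ^ j * (x ::ₘ μ).esymm (m - j) * x ^ j) := by
        intro j hj
        have : m + 1 - (j + 1) = m - j := by omega
        rw [this]; ring
      rw [Finset.sum_congr rfl hshift, ← Finset.mul_sum, ihm]
      simp only [pow_zero, Nat.sub_zero, one_mul, mul_one]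
      rw [esymm_cons]
      ring

lemma esymmR_eq_multiset {n : ℕ} (lam : Fin n → ℝ) (k : ℕ) :
    esymmR k lam = (Finset.univ.val.map lam).esymm k := by
  rw [Finset.esymm_map_val]; rfl

-- positivity of the diagonal entries
lemma diag_pos {n : ℕ} (k : ℕ) (hk1 : 1 ≤ k) (hk : k ≤ n) (lam : Fin n → ℝ)
    (hpos : ∀ j, 1 ≤ j → j ≤ k → 0 < esymmR j lam) (i : Fin n) :
    0 < ∑ j ∈ Finset.range (k - 1 + 1),
        (-1 : ℝ) ^ j * esymmR (k - 1 - j) lam * lam i ^ j := by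
  set M := Finset.univ.val.map lam with hM
  have hmem : lam i ∈ M := Multiset.mem_map_of_mem lam (Finset.mem_univ i)
  have hcons : lam i ::ₘ M.erase (lam i) = M := Multiset.cons_erase hmem
  have hcard : Multiset.card M = n := by simp [hM]
  have hsum : ∑ j ∈ Finset.range (k - 1 + 1),
      (-1 : ℝ) ^ j * esymmR (k - 1 - j) lam * lam i ^ j
        = (M.erase (lam i)).esymm (k - 1) := by
    rw [← telescope (M.erase (lam i)) (lam i) (k - 1)]
    apply Finset.sum_congr rfl
    intro j hj
    rw [esymmR_eq_multiset, ← hM, hcons]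
  rw [hsum]
  apply garding (k - 1) M (lam i) hmem (by omega)
  intro j hj1 hj2
  rw [← esymmR_eq_multiset]
  exact hpos j hj1 (by omega)


lemma posDef_conj {n : ℕ} (U : Matrix.unitaryGroup (Fin n) ℂ)
    {D : Matrix (Fin n) (Fin n) ℂ} (hD : D.PosDef) :
    ((U : Matrix (Fin n) (Fin n) ℂ) * D * star (U : Matrix (Fin n) (Fin n) ℂ)).PosDef := by
  rw [Matrix.posDef_iff_dotProduct_mulVec]
  constructor
  · rw [show (star (U : Matrix (Fin n) (Fin n) ℂ)) = (U : Matrix (Fin n) (Fin n) ℂ)ᴴ from rfl]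
    exact Matrix.isHermitian_mul_mul_conjTranspose _ hD.1
  · intro x hx
    set V : Matrix (Fin n) (Fin n) ℂ := (U : Matrix (Fin n) (Fin n) ℂ) with hV
    set y := Vᴴ *ᵥ x with hy
    have hyx : star x ⬝ᵥ (V * D * star V) *ᵥ x = star y ⬝ᵥ D *ᵥ y := by
      rw [Matrix.star_eq_conjTranspose, ← Matrix.mulVec_mulVec, ← Matrix.mulVec_mulVec,
        Matrix.dotProduct_mulVec (star x) V, hy, Matrix.star_mulVec,
        Matrix.conjTranspose_conjTranspose]
    have hy0 : y ≠ 0 := by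
      intro h0
      apply hx
      have h1 : V * Vᴴ = 1 := by
        rw [← Matrix.star_eq_conjTranspose]
        exact mul_eq_one_comm.mp (Matrix.UnitaryGroup.star_mul_self U)
      have hVy : V *ᵥ y = x := by
        rw [hy, Matrix.mulVec_mulVec, h1, Matrix.one_mulVec]
      rw [← hVy, h0, Matrix.mulVec_zero]
    rw [hyx]
    exact hD.dotProduct_mulVec_pos hy0


end GardingAux

/-- If a Hermitian matrix `A` belongs to the Gårding cone `Γ_k^+` with `1 ≤ k ≤ n`,
then the Newton transformation `T_{k-1}(A)` is positive definite. -/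
theorem newtonH_posDef {n : ℕ} (k : ℕ) (hk1 : 1 ≤ k) (hk : k ≤ n)
    (A : Matrix (Fin n) (Fin n) ℂ) (hA : A.IsHermitian)
    (hAk : ∀ j, 1 ≤ j → j ≤ k → 0 < sigmaH hA j) :
    (newtonH hA (k - 1)).PosDef := by
  set lam := hA.eigenvalues with hlam
  set V : Matrix (Fin n) (Fin n) ℂ := (hA.eigenvectorUnitary : Matrix (Fin n) (Fin n) ℂ)
    with hV
  set D : Matrix (Fin n) (Fin n) ℂ := diagonal (RCLike.ofReal ∘ lam) with hD
  have hspec : A = V * D * star V := hA.spectral_theorem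
  have hVV : star V * V = 1 := Matrix.UnitaryGroup.star_mul_self hA.eigenvectorUnitary
  have hpow : ∀ j : ℕ, A ^ j = V * D ^ j * star V := by
    intro j
    induction j with
    | zero =>
        simp only [pow_zero, Matrix.mul_one]
        exact (mul_eq_one_comm.mp hVV).symm
    | succ j ihj =>
        rw [pow_succ, ihj, hspec,
          show V * D ^ j * star V * (V * D * star V)
              = V * D ^ j * (star V * V) * D * star V by
            simp only [Matrix.mul_assoc],
          hVV, Matrix.mul_one, pow_succ]
        simp only [Matrix.mul_assoc]
  set c : Fin n → ℝ := fun i => ∑ j ∈ Finset.range (k - 1 + 1),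
      (-1 : ℝ) ^ j * esymmR (k - 1 - j) lam * lam i ^ j with hc
  have hnewton : newtonH hA (k - 1) = V * diagonal (fun i => (c i : ℂ)) * star V := by
    rw [newtonH]
    have hterm : ∀ j ∈ Finset.range (k - 1 + 1),
        ((-1 : ℂ) ^ j * (sigmaH hA (k - 1 - j) : ℂ)) • A ^ j
          = V * diagonal (fun i => ((-1 : ℂ) ^ j * (sigmaH hA (k - 1 - j) : ℂ))
              * ((lam i : ℂ)) ^ j) * star V := by
      intro j _
      rw [hpow j, hD, Matrix.diagonal_pow, ← Matrix.smul_mul, ← Matrix.mul_smul,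
        ← Matrix.diagonal_smul]
      have hfun : (((-1:ℂ)^j * (sigmaH hA (k-1-j) : ℂ)) •
            ((RCLike.ofReal ∘ lam : Fin n → ℂ) ^ j))
          = (fun i => ((-1:ℂ)^j * (sigmaH hA (k-1-j) : ℂ)) * ((lam i : ℂ))^j) := by
        funext i
        simp [Function.comp]
      rw [hfun]
    have hdiagsum : ∀ (s : Finset ℕ) (g : ℕ → Fin n → ℂ),
        ∑ j ∈ s, diagonal (g j) = diagonal (fun i => ∑ j ∈ s, g j i) := by
      intro s g
      induction s using Finset.cons_induction with
      | empty => simp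
      | cons a s ha ihs =>
          rw [Finset.sum_cons, ihs, Matrix.diagonal_add]
          have : (fun i => g a i + ∑ j ∈ s, g j i)
              = (fun i => ∑ j ∈ Finset.cons a s ha, g j i) := by
            funext i
            rw [Finset.sum_cons]
          rw [this]
    rw [Finset.sum_congr rfl hterm, ← Finset.sum_mul, ← Finset.mul_sum, hdiagsum]
    congr 2
    funext i
    rw [hc]
    push_cast
    rfl
  rw [hnewton]
  apply GardingAux.posDef_conj
  rw [Matrix.posDef_diagonal_iff]
  intro i
  have := GardingAux.diag_pos k hk1 hk lam hAk i
  exact Complex.zero_lt_real.mpr this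
end

section
/- Let $1 \le k \le n-1$ and let $A$ be a Hermitian $n\times n$ complex matrix belonging to the G\u00e5rding cone $\Gamma_k^+$. Then $\sigma_{k+1}(A) \ \le\ \frac{n-k}{n(k+1)}\, \sigma_k(A)\, \sigma_1(A).$ -/
open Matrix

open Finset Polynomial

lemma sum_powersetCard_compl {ι : Type*} [Fintype ι] [DecidableEq ι] {k : ℕ}
    (hk : k ≤ Fintype.card ι) (F : Finset ι → ℝ) :
    ∑ t ∈ (univ : Finset ι).powersetCard k, F t
      = ∑ t ∈ (univ : Finset ι).powersetCard (Fintype.card ι - k), F tᶜ := by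
  refine Finset.sum_nbij' (fun t => tᶜ) (fun t => tᶜ) ?_ ?_ ?_ ?_ ?_
  · intro t ht
    rw [Finset.mem_powersetCard] at ht ⊢
    exact ⟨Finset.subset_univ _, by rw [Finset.card_compl, ht.2]⟩
  · intro t ht
    rw [Finset.mem_powersetCard] at ht ⊢
    refine ⟨Finset.subset_univ _, by rw [Finset.card_compl, ht.2]; omega⟩
  · intro t _; exact compl_compl t
  · intro t _; exact compl_compl t
  · intro t _; rw [compl_compl]

lemma sq_sum_eq {ι : Type*} [DecidableEq ι] (s : Finset ι) (f : ι → ℝ) :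
    (∑ i ∈ s, f i)^2 = (∑ i ∈ s, f i ^ 2) + 2 * ∑ t ∈ s.powersetCard 2, ∏ i ∈ t, f i := by
  induction s using Finset.induction with
  | empty => simp [Finset.powersetCard_eq_empty.2 (by norm_num : (∅:Finset ι).card < 2)]
  | @insert a s ha ih =>
    rw [Finset.sum_insert ha, Finset.sum_insert ha,
      Finset.powersetCard_succ_insert ha, Finset.sum_union, Finset.sum_image]
    · have h1 : ∑ t ∈ s.powersetCard 1, ∏ i ∈ insert a t, f i
          = f a * ∑ i ∈ s, f i := by
        rw [Finset.mul_sum, Finset.powersetCard_one, Finset.sum_map]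
        refine Finset.sum_congr rfl fun i hi => ?_
        have hai : a ∉ ({i} : Finset ι) := by
          simp only [Finset.mem_singleton]
          rintro rfl; exact ha hi
        simp [Finset.prod_insert hai]
      rw [h1, show Nat.succ 1 = 2 from rfl]
      linear_combination ih
    · intro t ht u hu htu
      have hat : a ∉ t := fun h => ha ((Finset.mem_powersetCard.1 ht).1 h)
      have hau : a ∉ u := fun h => ha ((Finset.mem_powersetCard.1 hu).1 h)
      rwa [Finset.insert_erase_invOn.2.injOn.eq_iff] at htu <;> simp [hat, hau]
    · rw [Finset.disjoint_left]
      intro t ht htu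
      obtain ⟨u, hu, rfl⟩ := Finset.mem_image.1 htu
      exact ha ((Finset.mem_powersetCard.1 ht).1 (Finset.mem_insert_self a u))

lemma esymm_base_ineq {ι : Type*} [Fintype ι] [DecidableEq ι] (f : ι → ℝ)
    (hn : 2 ≤ Fintype.card ι) :
    2 * (Fintype.card ι : ℝ)^2 *
        ((∑ t ∈ (univ:Finset ι).powersetCard (Fintype.card ι - 2), ∏ i ∈ t, f i) *
         (∑ t ∈ (univ:Finset ι).powersetCard (Fintype.card ι), ∏ i ∈ t, f i))
      ≤ (Fintype.card ι : ℝ) * ((Fintype.card ι : ℝ) - 1) *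
        (∑ t ∈ (univ:Finset ι).powersetCard (Fintype.card ι - 1), ∏ i ∈ t, f i)^2 := by
  set n := Fintype.card ι with hn_def
  set c : ι → ℝ := fun i => ∏ j ∈ (univ:Finset ι).erase i, f j with hc_def
  have hEn : ∑ t ∈ (univ:Finset ι).powersetCard n, ∏ i ∈ t, f i = ∏ i, f i := by
    rw [hn_def, ← Finset.card_univ, Finset.powersetCard_self, Finset.sum_singleton]
  have hE1 : ∑ t ∈ (univ:Finset ι).powersetCard (n-1), ∏ i ∈ t, f i = ∑ i, c i := by
    rw [sum_powersetCard_compl (by omega), show n - (n-1) = 1 by omega,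
      Finset.powersetCard_one, Finset.sum_map]
    refine Finset.sum_congr rfl fun i _ => ?_
    simp [Finset.compl_singleton, hc_def]
  have key : ∀ t ∈ (univ:Finset ι).powersetCard 2,
      (∏ i ∈ tᶜ, f i) * (∏ i, f i) = ∏ i ∈ t, c i := by
    intro t ht
    obtain ⟨x, y, hxy, rfl⟩ := Finset.card_eq_two.1 (Finset.mem_powersetCard.1 ht).2
    have hyx : y ∈ (univ:Finset ι).erase x := Finset.mem_erase.2 ⟨fun h => hxy h.symm, Finset.mem_univ y⟩
    have hxy' : x ∈ (univ:Finset ι).erase y := Finset.mem_erase.2 ⟨hxy, Finset.mem_univ x⟩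
    have hcompl : ({x,y} : Finset ι)ᶜ = ((univ:Finset ι).erase x).erase y := by
      ext z; simp [not_or, and_comm]
    have e1 : ∏ i ∈ (univ:Finset ι).erase x, f i
        = f y * ∏ i ∈ ((univ:Finset ι).erase x).erase y, f i :=
      (Finset.mul_prod_erase _ f hyx).symm
    have e2 : ∏ i ∈ (univ:Finset ι).erase y, f i
        = f x * ∏ i ∈ ((univ:Finset ι).erase x).erase y, f i := by
      rw [show ((univ:Finset ι).erase x).erase y = ((univ:Finset ι).erase y).erase x from
        Finset.erase_right_comm]
      exact (Finset.mul_prod_erase _ f hxy').symm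
    have e3 : ∏ i, f i = f x * ∏ i ∈ (univ:Finset ι).erase x, f i :=
      (Finset.mul_prod_erase _ f (Finset.mem_univ x)).symm
    rw [Finset.prod_pair hxy, hcompl, e3, e1]
    simp only [hc_def, e1, e2]
    ring
  have hE2 : (∑ t ∈ (univ:Finset ι).powersetCard (n-2), ∏ i ∈ t, f i) * (∏ i, f i)
      = ∑ t ∈ (univ:Finset ι).powersetCard 2, ∏ i ∈ t, c i := by
    rw [sum_powersetCard_compl (by omega), show n - (n-2) = 2 by omega, Finset.sum_mul]
    exact Finset.sum_congr rfl key
  have hCS : (∑ i, c i)^2 ≤ (n : ℝ) * ∑ i, (c i)^2 := by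
    simpa [hn_def, Finset.card_univ] using
      (sq_sum_le_card_mul_sum_sq (s := (univ:Finset ι)) (f := c))
  have hId : (∑ i, c i)^2 = (∑ i, (c i)^2) + 2 * ∑ t ∈ (univ:Finset ι).powersetCard 2, ∏ i ∈ t, c i :=
    sq_sum_eq univ c
  have hn' : (2:ℝ) ≤ n := by exact_mod_cast hn
  have hCS' : (n:ℝ) * (∑ i, c i)^2 ≤ (n:ℝ) * ((n : ℝ) * ∑ i, (c i)^2) :=
    mul_le_mul_of_nonneg_left hCS (by linarith)
  rw [hEn, hE1, mul_comm (∑ t ∈ (univ:Finset ι).powersetCard (n-2), ∏ i ∈ t, f i) (∏ i, f i),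
    ← mul_assoc, mul_assoc _ (∏ i, f i), mul_comm (∏ i, f i), hE2]
  nlinarith [hCS', hId]

lemma choose_helper {n i : ℕ} (h : i ≤ n) (hn : 1 ≤ n) :
    (n - i) * n.choose i = n * (n-1).choose i := by
  obtain ⟨m, rfl⟩ : ∃ m, n = m + 1 := ⟨n - 1, by omega⟩
  cases i with
  | zero => simp
  | succ j =>
    have hjm : j ≤ m := by omega
    have h1 : (m+1) * m.choose j = (m+1).choose (j+1) * (j+1) :=
      Nat.add_one_mul_choose_eq m j
    have h2 : m.choose (j+1) * (j+1) = m.choose j * (m - j) :=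
      Nat.choose_succ_right_eq m j
    have h3 : ((m+1) - (j+1)) * (m+1).choose (j+1) * (j+1)
        = (m+1) * (m+1-1).choose (j+1) * (j+1) := by
      have : (m+1) - (j+1) = m - j := by omega
      rw [this, Nat.add_sub_cancel]
      calc (m - j) * (m+1).choose (j+1) * (j+1)
          = (m - j) * ((m+1).choose (j+1) * (j+1)) := by ring
        _ = (m - j) * ((m+1) * m.choose j) := by rw [← h1]
        _ = (m+1) * (m.choose j * (m - j)) := by ring
        _ = (m+1) * (m.choose (j+1) * (j+1)) := by rw [h2]
        _ = (m+1) * m.choose (j+1) * (j+1) := by ring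
    exact Nat.eq_of_mul_eq_mul_right (Nat.succ_pos j) h3

noncomputable def pnorm (s : Multiset ℝ) (i : ℕ) : ℝ :=
  s.esymm i / ((Multiset.card s).choose i)

lemma newton_multiset_base (s : Multiset ℝ) (j : ℕ) (hj1 : 1 ≤ j)
    (hcard : Multiset.card s = j + 1) :
    pnorm s (j-1) * pnorm s (j+1) ≤ pnorm s j ^ 2 := by
  have hls : (s.toList : Multiset ℝ) = s := Multiset.coe_toList s
  have hlen : s.toList.length = j + 1 := by
    rw [← Multiset.coe_card, hls, hcard]
  have hmap : Multiset.map s.toList.get (Finset.univ.val) = s := by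
    rw [Fin.univ_val_map, List.ofFn_get, hls]
  have hcardFin : Fintype.card (Fin s.toList.length) = j + 1 := by
    rw [Fintype.card_fin, hlen]
  have hesymm : ∀ i, s.esymm i
      = ∑ t ∈ (univ : Finset (Fin s.toList.length)).powersetCard i, ∏ x ∈ t, s.toList.get x := by
    intro i
    conv_lhs => rw [← hmap]
    exact Finset.esymm_map_val _ _ _
  have hbase := esymm_base_ineq s.toList.get (by omega)
  rw [hcardFin] at hbase
  rw [show j + 1 - 2 = j - 1 by omega, show j + 1 - 1 = j by omega] at hbase
  rw [← hesymm, ← hesymm, ← hesymm] at hbase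
  push_cast at hbase
  have hC1 : (((j+1).choose (j+1) : ℕ) : ℝ) = 1 := by rw [Nat.choose_self]; norm_num
  have hC2 : (((j+1).choose j : ℕ) : ℝ) = (j:ℝ) + 1 := by
    rw [Nat.choose_succ_self_right]; push_cast; ring
  have hC3 : (((j+1).choose (j-1) : ℕ) : ℝ) = ((j:ℝ)+1) * ((j:ℝ)+1-1) / 2 := by
    rw [show j - 1 = (j+1) - 2 by omega, Nat.choose_symm (by omega), Nat.cast_choose_two]
    push_cast; ring
  have hj1' : (1:ℝ) ≤ (j:ℝ) := by exact_mod_cast hj1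
  rw [pnorm, pnorm, pnorm, hcard, hC1, hC2, hC3]
  rw [div_pow, div_mul_div_comm, div_le_div_iff₀ (by nlinarith) (by nlinarith)]
  nlinarith [hbase]

lemma newton_multiset (n : ℕ) : ∀ (s : Multiset ℝ), Multiset.card s = n →
    ∀ j, 1 ≤ j → j + 1 ≤ n → pnorm s (j-1) * pnorm s (j+1) ≤ pnorm s j ^ 2 := by
  induction n using Nat.strong_induction_on with
  | _ n IH =>
  intro s hs j hj1 hjn
  rcases eq_or_lt_of_le hjn with heq | hlt
  · exact newton_multiset_base s j hj1 (by omega)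
  · have hn3 : 3 ≤ n := by omega
    set P : Polynomial ℝ := (s.map (fun a => X - C a)).prod with hP
    have hPmonic : P.Monic := monic_multiset_prod_of_monic _ _ (fun a _ => monic_X_sub_C a)
    have hProots : P.roots = s := roots_multiset_prod_X_sub_C s
    have hPdeg : P.natDegree = n := by
      rw [hP, natDegree_multiset_prod_X_sub_C_eq_card, hs]
    set Q := derivative P with hQ
    have hQtop : Q.coeff (n-1) = n := by
      rw [hQ, coeff_derivative]
      have h1 : P.coeff (n - 1 + 1) = 1 := by
        rw [show n - 1 + 1 = n by omega, ← hPdeg]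
        exact hPmonic.coeff_natDegree
      rw [h1]
      have : ((n - 1 : ℕ) : ℝ) + 1 = (n : ℝ) := by
        have h2 : n - 1 + 1 = n := by omega
        exact_mod_cast congrArg (Nat.cast : ℕ → ℝ) h2
      rw [one_mul, this]
    have hQdeg : Q.natDegree = n - 1 := by
      refine le_antisymm ?_ ?_
      · have h := natDegree_derivative_le P
        rwa [hPdeg] at h
      · refine le_natDegree_of_ne_zero ?_
        rw [hQtop]
        exact Nat.cast_ne_zero.2 (by omega)
    have hQcard : Multiset.card Q.roots = n - 1 := by
      refine le_antisymm ?_ ?_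
      · rw [← hQdeg]; exact card_roots' Q
      · have h := card_roots_le_derivative P
        rw [hProots, hs, ← hQ] at h; omega
    have hQlead : Q.leadingCoeff = n := by rw [leadingCoeff, hQdeg, hQtop]
    have hrel : ∀ i, i ≤ n - 1 →
        (n:ℝ) * Q.roots.esymm i = ((n - i : ℕ) : ℝ) * s.esymm i := by
      intro i hi
      have h1 : Q.coeff (n-1-i) = Q.leadingCoeff * (-1)^(Q.natDegree - (n-1-i))
          * Q.roots.esymm (Q.natDegree - (n-1-i)) :=
        coeff_eq_esymm_roots_of_card (by rw [hQcard, hQdeg]) (by rw [hQdeg]; omega)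
      have h2 : P.coeff (n-i) = P.leadingCoeff * (-1)^(P.natDegree - (n-i))
          * P.roots.esymm (P.natDegree - (n-i)) :=
        coeff_eq_esymm_roots_of_card (by rw [hProots, hs, hPdeg]) (by rw [hPdeg]; omega)
      rw [hQdeg, show n - 1 - (n-1-i) = i by omega, hQlead] at h1
      rw [hPdeg, hProots, show n - (n-i) = i by omega, hPmonic.leadingCoeff, one_mul] at h2
      have h3 : Q.coeff (n-1-i) = P.coeff (n-1-i+1) * ((n-1-i : ℕ) + 1 : ℝ) :=
        coeff_derivative P (n-1-i)
      have hcast : ((n-1-i : ℕ) : ℝ) + 1 = ((n - i : ℕ) : ℝ) := by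
        have h4 : n-1-i+1 = n-i := by omega
        exact_mod_cast congrArg (Nat.cast : ℕ → ℝ) h4
      rw [show n-1-i+1 = n-i by omega, h2, hcast] at h3
      have hpm : ((-1:ℝ))^i ≠ 0 := pow_ne_zero _ (by norm_num)
      refine mul_left_cancel₀ hpm ?_
      calc (-1:ℝ)^i * ((n:ℝ) * Q.roots.esymm i) = Q.coeff (n-1-i) := by rw [h1]; ring
        _ = (-1:ℝ)^i * (((n - i : ℕ):ℝ) * s.esymm i) := by rw [h3]; ring
    have hptrans : ∀ i, i ≤ n - 1 → pnorm Q.roots i = pnorm s i := by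
      intro i hi
      rw [pnorm, pnorm, hQcard, hs]
      have hCpos : (0:ℝ) < (n.choose i : ℝ) := by
        exact_mod_cast Nat.choose_pos (by omega : i ≤ n)
      have hCpos' : (0:ℝ) < ((n-1).choose i : ℝ) := by
        exact_mod_cast Nat.choose_pos hi
      rw [div_eq_div_iff hCpos'.ne' hCpos.ne']
      have hmain := hrel i hi
      have hchoose : ((n - i) * n.choose i : ℕ) = (n * (n-1).choose i : ℕ) :=
        choose_helper (by omega) (by omega)
      have hn0 : (n:ℝ) ≠ 0 := by positivity
      refine mul_left_cancel₀ hn0 ?_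
      calc (n:ℝ) * (Q.roots.esymm i * (n.choose i : ℝ))
          = ((n:ℝ) * Q.roots.esymm i) * (n.choose i : ℝ) := by ring
        _ = (((n-i:ℕ):ℝ) * s.esymm i) * (n.choose i : ℝ) := by rw [hmain]
        _ = s.esymm i * (((n-i) * n.choose i : ℕ) : ℝ) := by push_cast; ring
        _ = s.esymm i * ((n * (n-1).choose i : ℕ) : ℝ) := by rw [hchoose]
        _ = (n:ℝ) * (s.esymm i * ((n-1).choose i : ℝ)) := by push_cast; ring
    rw [← hptrans (j-1) (by omega), ← hptrans (j+1) (by omega), ← hptrans j (by omega)]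
    exact IH (n-1) (by omega) Q.roots hQcard j hj1 (by omega)

lemma pnorm_zero (s : Multiset ℝ) : pnorm s 0 = 1 := by
  simp [pnorm, Multiset.esymm]

lemma chain (s : Multiset ℝ) {n k : ℕ} (hs : Multiset.card s = n) (hk : k + 1 ≤ n)
    (hpos : ∀ j, 1 ≤ j → j ≤ k → 0 < pnorm s j) :
    ∀ j, 1 ≤ j → j ≤ k → pnorm s (j+1) ≤ pnorm s 1 * pnorm s j := by
  intro j
  induction j with
  | zero => intro h; omega
  | succ i ih =>
    intro _ hik
    rcases Nat.eq_zero_or_pos i with rfl | hi1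
    · have hnewt := newton_multiset n s hs 1 le_rfl (by omega)
      rw [show (1:ℕ) - 1 = 0 from rfl, pnorm_zero, one_mul] at hnewt
      calc pnorm s 2 ≤ pnorm s 1 ^ 2 := hnewt
        _ = pnorm s 1 * pnorm s 1 := sq (pnorm s 1) ▸ by ring
    · have hih := ih hi1 (by omega)
      have hnewt := newton_multiset n s hs (i+1) (by omega) (by omega)
      rw [show i + 1 - 1 = i from rfl] at hnewt
      have hpi : 0 < pnorm s i := hpos i hi1 (by omega)
      have hpi1 : 0 < pnorm s (i+1) := hpos (i+1) (by omega) hik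
      have hp1 : 0 < pnorm s 1 := hpos 1 le_rfl (by omega)
      by_cases hneg : pnorm s (i+1+1) ≤ 0
      · exact hneg.trans (by positivity)
      · push_neg at hneg
        nlinarith [mul_le_mul_of_nonneg_right hih hpi1.le]

/-- Newton-type inequality: for a Hermitian matrix `A ∈ Γ_k^+` with `1 ≤ k ≤ n - 1`,
`σ_{k+1}(A) ≤ ((n-k)/(n(k+1))) σ_k(A) σ_1(A)`. -/
theorem sigmaH_newton_inequality {n : ℕ} (k : ℕ) (hk1 : 1 ≤ k) (hk : k + 1 ≤ n)
    (A : Matrix (Fin n) (Fin n) ℂ) (hA : A.IsHermitian)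
    (hAk : ∀ j, 1 ≤ j → j ≤ k → 0 < sigmaH hA j) :
    sigmaH hA (k + 1) ≤
      ((n : ℝ) - k) / ((n : ℝ) * (k + 1)) * sigmaH hA k * sigmaH hA 1 := by
  set lam := hA.eigenvalues with hlam
  set s : Multiset ℝ := Multiset.map lam Finset.univ.val with hsdef
  have hcards : Multiset.card s = n := by simp [hsdef]
  have hsig : ∀ i, sigmaH hA i = s.esymm i := by
    intro i
    rw [sigmaH, esymmR, hsdef, Finset.esymm_map_val]
  have hCk : (0:ℝ) < (n.choose k : ℝ) := by
    exact_mod_cast Nat.choose_pos (by omega : k ≤ n)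
  have hCk1 : (0:ℝ) < (n.choose (k+1) : ℝ) := by
    exact_mod_cast Nat.choose_pos hk
  have hn0 : (0:ℝ) < (n:ℝ) := by
    exact_mod_cast (by omega : 0 < n)
  have hk0 : (0:ℝ) < (k:ℝ) + 1 := by positivity
  have hpos : ∀ j, 1 ≤ j → j ≤ k → 0 < pnorm s j := by
    intro j hj1 hjk
    rw [pnorm, hcards]
    have := hAk j hj1 hjk
    rw [hsig j] at this
    have hCj : (0:ℝ) < (n.choose j : ℝ) := by
      exact_mod_cast Nat.choose_pos (by omega : j ≤ n)
    positivity
  have hchain := chain s hcards hk hpos k hk1 le_rfl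
  rw [pnorm, pnorm, pnorm, hcards] at hchain
  rw [Nat.choose_one_right] at hchain
  rw [div_le_iff₀ hCk1] at hchain
  rw [hsig (k+1), hsig k, hsig 1]
  refine hchain.trans (le_of_eq ?_)
  have hid : (n.choose (k+1) : ℝ) * ((k:ℝ)+1) = (n.choose k : ℝ) * ((n:ℝ) - (k:ℝ)) := by
    have h := Nat.choose_succ_right_eq n k
    have hcast : ((n - k : ℕ) : ℝ) = (n:ℝ) - (k:ℝ) := by
      rw [Nat.cast_sub (by omega : k ≤ n)]
    calc (n.choose (k+1) : ℝ) * ((k:ℝ)+1)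
        = ((n.choose (k+1) * (k+1) : ℕ) : ℝ) := by push_cast; ring
      _ = ((n.choose k * (n - k) : ℕ) : ℝ) := by rw [h]
      _ = (n.choose k : ℝ) * ((n:ℝ) - (k:ℝ)) := by push_cast [hcast]; ring
  field_simp
  linear_combination (s.esymm 1 * s.esymm k) * hid
end
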